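/- Let (E, ‖·‖) be a two-dimensional real normed space and let ω be a nonzero alternating bilinear form on E. Define the antinorm by ‖x‖ₐ := sup{|ω(y, x)| : y ∈ E, ‖y‖ = 1}. Then Birkhoff orthogonality is a symmetric relation on E (i.e., for all x, y ∈ E, x ⊣_B y implies y ⊣_B x) if and only if the unit anticircle is a homothet of the unit circle, i.e., there exists c > 0 such that {x ∈ E : ‖x‖ₐ = 1} = c • {x ∈ E : ‖x‖ = 1}. -/

import Mathlib

open Pointwise

/-- Birkhoff orthogonality: `x ⊣_B y` iff `‖x‖ ≤ ‖x + t • y‖` for every `t`. -/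
def BirkhoffOrth {E : Type*} [NormedAddCommGroup E] [NormedSpace ℝ E]
    (x y : E) : Prop := ∀ t : ℝ, ‖x‖ ≤ ‖x + t • y‖

/-- The antinorm associated to a determinant form `ω`. -/
noncomputable def antinorm {E : Type*} [NormedAddCommGroup E] [NormedSpace ℝ E]
    (ω : E →ₗ[ℝ] E →ₗ[ℝ] ℝ) (x : E) : ℝ :=
  sSup ((fun y => |ω y x|) '' Metric.sphere (0 : E) 1)

namespace Stmt12Aux

variable {E : Type*} [NormedAddCommGroup E] [NormedSpace ℝ E]
variable {ω : E →ₗ[ℝ] E →ₗ[ℝ] ℝ}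

lemma anti (halt : ∀ x : E, ω x x = 0) (x y : E) : ω x y = - ω y x := by
  have h := halt (x + y)
  simp only [map_add, LinearMap.add_apply, halt] at h
  linarith

lemma exists_pair (hω : ω ≠ 0) : ∃ a b : E, ω a b ≠ 0 := by
  by_contra h
  push_neg at h
  exact hω (by ext a b; simp [h])

lemma indep_of_ne (halt : ∀ x : E, ω x x = 0) {a b : E} (h : ω a b ≠ 0) :
    LinearIndependent ℝ ![a, b] := by
  rw [LinearIndependent.pair_iff]
  intro s t hst
  have h1 : ω (s • a + t • b) b = 0 := by rw [hst]; simp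
  have h2 : ω a (s • a + t • b) = 0 := by rw [hst]; simp
  simp only [map_add, map_smul, LinearMap.add_apply, LinearMap.smul_apply, halt,
    smul_eq_mul, mul_zero, add_zero, zero_add] at h1 h2
  exact ⟨by rcases mul_eq_zero.1 h1 with h'|h'; exact h'; exact absurd h' h,
    by rcases mul_eq_zero.1 h2 with h'|h'; exact h'; exact absurd h' h⟩

section Dim
variable (hdim : Module.finrank ℝ E = 2)
include hdim

lemma fd : FiniteDimensional ℝ E := Module.finite_of_finrank_eq_succ hdim

lemma ntriv : Nontrivial E := by
  haveI := fd hdim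
  exact Module.nontrivial_of_finrank_pos (R := ℝ) (by rw [hdim]; norm_num)

/-- A basis from two independent vectors. -/
noncomputable def basis2 {a b : E} (h : LinearIndependent ℝ ![a, b]) : Module.Basis (Fin 2) ℝ E :=
  basisOfLinearIndependentOfCardEqFinrank h (by simp [hdim])

lemma basis2_apply {a b : E} (h : LinearIndependent ℝ ![a, b]) :
    basis2 hdim h 0 = a ∧ basis2 hdim h 1 = b := by
  have := coe_basisOfLinearIndependentOfCardEqFinrank h
    (by simp [hdim] : Fintype.card (Fin 2) = Module.finrank ℝ E)
  constructor
  · rw [show (basis2 hdim h) 0 = _ from congrFun this 0]; rfl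
  · rw [show (basis2 hdim h) 1 = _ from congrFun this 1]; rfl

lemma nondeg (halt : ∀ x : E, ω x x = 0) (hω : ω ≠ 0) {z : E} (hz : z ≠ 0) :
    ∃ u : E, ω z u ≠ 0 := by
  by_contra hcon
  push_neg at hcon
  obtain ⟨a, b, hab⟩ := exists_pair hω
  have hi := indep_of_ne halt hab
  set bb := basis2 hdim hi with hbb
  obtain ⟨h0, h1⟩ := basis2_apply hdim hi
  have hrepr := bb.sum_repr z
  rw [Fin.sum_univ_two, h0, h1] at hrepr
  have e1 : ω z b = 0 := hcon b
  have e2 : ω z a = 0 := hcon a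
  rw [← hrepr] at e1 e2
  simp only [map_add, map_smul, LinearMap.add_apply, LinearMap.smul_apply, halt,
    smul_eq_mul, mul_zero, add_zero, zero_add] at e1 e2
  rw [anti halt b a] at e2
  have hc1 : bb.repr z 0 = 0 := by
    rcases mul_eq_zero.1 e1 with h | h
    · exact h
    · exact absurd h hab
  have hc2 : bb.repr z 1 = 0 := by
    rcases mul_eq_zero.1 e2 with h | h
    · exact h
    · exact absurd (neg_eq_zero.1 h) hab
  rw [hc1, hc2] at hrepr
  simp at hrepr
  exact hz hrepr.symm

lemma mult_of_ker (halt : ∀ x : E, ω x x = 0) (hω : ω ≠ 0) {z y : E} (hy : y ≠ 0)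
    (h : ω z y = 0) : ∃ μ : ℝ, z = μ • y := by
  rcases eq_or_ne z 0 with rfl | hz
  · exact ⟨0, by simp⟩
  by_contra hcon
  push_neg at hcon
  have hi : LinearIndependent ℝ ![y, z] :=
    (LinearIndependent.pair_iff' hy).2 (fun a ha => hcon a (by rw [← ha]))
  set bb := basis2 hdim hi with hbb
  obtain ⟨h0, h1⟩ := basis2_apply hdim hi
  obtain ⟨u, hu⟩ := nondeg hdim halt hω hz
  have hrepr := bb.sum_repr u
  rw [Fin.sum_univ_two, h0, h1] at hrepr
  rw [← hrepr] at hu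
  simp only [map_add, map_smul, LinearMap.add_apply, LinearMap.smul_apply, halt,
    smul_eq_mul, h, mul_zero, add_zero] at hu
  exact hu rfl

lemma omega_bound : ∃ B : ℝ, 0 < B ∧ ∀ z u : E, |ω z u| ≤ B * ‖z‖ * ‖u‖ := by
  haveI := fd hdim
  let e : (E →ₗ[ℝ] ℝ) ≃ₗ[ℝ] (E →L[ℝ] ℝ) := LinearMap.toContinuousLinearMap
  let L1 : E →ₗ[ℝ] (E →L[ℝ] ℝ) := e.toLinearMap.comp ω
  let L2 : E →L[ℝ] (E →L[ℝ] ℝ) := L1.toContinuousLinearMap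
  refine ⟨‖L2‖ + 1, by positivity, fun z u => ?_⟩
  have h1 : |ω z u| = ‖(L2 z) u‖ := by
    simp only [L2, L1, e, LinearMap.coe_toContinuousLinearMap', LinearMap.coe_comp,
      Function.comp_apply, LinearEquiv.coe_coe, Real.norm_eq_abs]
  rw [h1]
  have h2 := (L2 z).le_opNorm u
  have h3 := L2.le_opNorm z
  nlinarith [norm_nonneg u, norm_nonneg z, norm_nonneg (L2 z), norm_nonneg L2]


section Anti

lemma sphere_ne : (Metric.sphere (0:E) 1).Nonempty := by
  haveI := ntriv hdim
  obtain ⟨a, ha⟩ := exists_norm_eq E zero_le_one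
  exact ⟨a, by simpa [Metric.mem_sphere, dist_zero_right] using ha⟩

lemma anti_bddAbove (x : E) :
    BddAbove ((fun y => |ω y x|) '' Metric.sphere (0:E) 1) := by
  obtain ⟨B, hB, hb⟩ := omega_bound (ω := ω) hdim
  refine ⟨B * ‖x‖, fun v hv => ?_⟩
  obtain ⟨a, ha, rfl⟩ := hv
  have ha' : ‖a‖ = 1 := by simpa [Metric.mem_sphere, dist_zero_right] using ha
  calc |ω a x| ≤ B * ‖a‖ * ‖x‖ := hb a x
    _ = B * ‖x‖ := by rw [ha']; ring

lemma le_antinorm {a : E} (ha : ‖a‖ = 1) (x : E) : |ω a x| ≤ antinorm ω x :=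
  le_csSup (anti_bddAbove hdim x)
    ⟨a, by simpa [Metric.mem_sphere, dist_zero_right] using ha, rfl⟩

lemma antinorm_le_bound (u x : E) : |ω u x| ≤ ‖u‖ * antinorm ω x := by
  rcases eq_or_ne u 0 with rfl | hu
  · simp
  have hn : ‖u‖ ≠ 0 := norm_ne_zero_iff.2 hu
  have h1 : ‖(‖u‖⁻¹ • u)‖ = 1 := by
    rw [norm_smul, norm_inv, norm_norm, inv_mul_cancel₀ hn]
  have h2 := le_antinorm (ω := ω) hdim h1 x
  have h3 : |ω (‖u‖⁻¹ • u) x| = ‖u‖⁻¹ * |ω u x| := by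
    simp [map_smul, abs_mul, abs_of_nonneg (inv_nonneg.2 (norm_nonneg u))]
  rw [h3] at h2
  have := mul_le_mul_of_nonneg_left h2 (norm_nonneg u)
  rwa [← mul_assoc, mul_inv_cancel₀ hn, one_mul] at this

lemma antinorm_nonneg (x : E) : 0 ≤ antinorm ω x := by
  obtain ⟨a, ha⟩ := sphere_ne hdim
  have ha' : ‖a‖ = 1 := by simpa [Metric.mem_sphere, dist_zero_right] using ha
  exact le_trans (abs_nonneg _) (le_antinorm hdim ha' x)

lemma antinorm_csSup_le {x : E} {c : ℝ} (h : ∀ a : E, ‖a‖ = 1 → |ω a x| ≤ c) :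
    antinorm ω x ≤ c := by
  refine csSup_le ?_ ?_
  · obtain ⟨a, ha⟩ := sphere_ne hdim
    exact ⟨_, ⟨a, ha, rfl⟩⟩
  · rintro v ⟨a, ha, rfl⟩
    exact h a (by simpa [Metric.mem_sphere, dist_zero_right] using ha)

lemma antinorm_attain (x : E) : ∃ a : E, ‖a‖ = 1 ∧ |ω a x| = antinorm ω x := by
  haveI := fd hdim
  have hc : IsCompact (Metric.sphere (0:E) 1) := isCompact_sphere 0 1
  have hcont : Continuous (fun y : E => |ω y x|) := by
    haveI := fd hdim
    exact ((ω.flip x).continuous_of_finiteDimensional).abs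
  obtain ⟨a, ha, hmax⟩ := hc.exists_isMaxOn (sphere_ne hdim) hcont.continuousOn
  have ha' : ‖a‖ = 1 := by simpa [Metric.mem_sphere, dist_zero_right] using ha
  refine ⟨a, ha', le_antisymm (le_antinorm hdim ha' x) (antinorm_csSup_le hdim ?_)⟩
  intro b hb
  have hb' : b ∈ Metric.sphere (0:E) 1 := by
    simp [Metric.mem_sphere, dist_zero_right, hb]
  simpa using hmax hb'

lemma antinorm_pos (halt : ∀ x : E, ω x x = 0) (hω : ω ≠ 0) {x : E} (hx : x ≠ 0) :
    0 < antinorm ω x := by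
  obtain ⟨u, hu⟩ := nondeg hdim halt hω hx
  have hu' : ω u x ≠ 0 := by rw [anti halt u x]; simpa using hu
  have h1 : 0 < |ω u x| := abs_pos.2 hu'
  have h2 := antinorm_le_bound (ω := ω) hdim u x
  have hun : 0 < ‖u‖ := by
    rcases eq_or_ne u 0 with rfl | h
    · simp at hu'
    · exact norm_pos_iff.2 h
  nlinarith

lemma antinorm_smul (c : ℝ) (x : E) : antinorm ω (c • x) = |c| * antinorm ω x := by
  apply le_antisymm
  · refine antinorm_csSup_le hdim (fun a ha => ?_)
    have : |ω a (c • x)| = |c| * |ω a x| := by simp [abs_mul]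
    rw [this]
    exact mul_le_mul_of_nonneg_left (le_antinorm hdim ha x) (abs_nonneg c)
  · obtain ⟨a, ha, hax⟩ := antinorm_attain (ω := ω) hdim x
    have : |c| * antinorm ω x = |ω a (c • x)| := by
      simp [abs_mul, hax]
    rw [this]
    exact le_antinorm hdim ha _

lemma antinorm_zero' : antinorm ω (0 : E) = 0 := by
  apply le_antisymm
  · exact antinorm_csSup_le hdim (fun a _ => by simp)
  · exact antinorm_nonneg hdim 0

lemma antinorm_add (x y : E) : antinorm ω (x + y) ≤ antinorm ω x + antinorm ω y := by
  refine antinorm_csSup_le hdim (fun a ha => ?_)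
  calc |ω a (x + y)| ≤ |ω a x| + |ω a y| := by
        rw [map_add]; exact abs_add_le _ _
    _ ≤ _ := add_le_add (le_antinorm hdim ha x) (le_antinorm hdim ha y)

lemma antinorm_le_const : ∃ B : ℝ, 0 < B ∧ ∀ x : E, antinorm ω x ≤ B * ‖x‖ := by
  obtain ⟨B, hB, hb⟩ := omega_bound (ω := ω) hdim
  exact ⟨B, hB, fun x => antinorm_csSup_le hdim (fun a ha => by
    have := hb a x; rw [ha] at this; simpa using this)⟩

lemma antinorm_continuous : Continuous (antinorm ω) := by
  obtain ⟨B, hB, hb⟩ := antinorm_le_const (ω := ω) hdim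
  have key : ∀ a b : E, antinorm ω a - antinorm ω b ≤ B * ‖a - b‖ := by
    intro a b
    have h1 : antinorm ω a ≤ antinorm ω (a - b) + antinorm ω b := by
      have := antinorm_add (ω := ω) hdim (a - b) b
      simpa using this
    have h2 := hb (a - b)
    linarith
  rw [Metric.continuous_iff]
  intro a ε hε
  refine ⟨ε / (B + 1), by positivity, fun b hab => ?_⟩
  have h1 := key b a
  have h2 := key a b
  have h3 : ‖b - a‖ < ε / (B + 1) := by rwa [dist_eq_norm] at hab
  have h4 : ‖a - b‖ = ‖b - a‖ := norm_sub_rev a b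
  have h5 : B * ‖b - a‖ < B * (ε / (B + 1)) := mul_lt_mul_of_pos_left h3 hB
  have h8 : (B + 1) * (ε / (B + 1)) = ε := by field_simp
  have h9 : ‖b - a‖ ≥ 0 := norm_nonneg _
  rw [Real.dist_eq, abs_lt]
  constructor <;> nlinarith

end Anti


section HB

lemma repr_exists (halt : ∀ x : E, ω x x = 0) (hω : ω ≠ 0) (g : E →ₗ[ℝ] ℝ) :
    ∃ z : E, ∀ u : E, ω z u = g u := by
  obtain ⟨a, b, hab⟩ := exists_pair hω
  have hi := indep_of_ne halt hab
  obtain ⟨h0, h1⟩ := basis2_apply hdim hi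
  set d := ω a b with hd
  refine ⟨(g b / d) • a - (g a / d) • b, fun u => ?_⟩
  have key : ω ((g b / d) • a - (g a / d) • b) = g := by
    apply (basis2 hdim hi).ext
    intro i
    fin_cases i
    · rw [show ((basis2 hdim hi) ⟨0, by norm_num⟩ : E) = a from h0]
      simp only [map_sub, map_smul, LinearMap.sub_apply, LinearMap.smul_apply,
        smul_eq_mul, halt]
      rw [anti halt b a]
      field_simp
      rw [hd]; ring
    · rw [show ((basis2 hdim hi) ⟨1, by norm_num⟩ : E) = b from h1]
      simp only [map_sub, map_smul, LinearMap.sub_apply, LinearMap.smul_apply,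
        smul_eq_mul, halt]
      field_simp
      rw [hd]; ring
  rw [key]

lemma fnorm_exists (halt : ∀ x : E, ω x x = 0) (hω : ω ≠ 0) {v : E} (hv : v ≠ 0) :
    ∃ z : E, ω z v = ‖v‖ ∧ ∀ u : E, |ω z u| ≤ ‖u‖ := by
  haveI := fd hdim
  obtain ⟨g, hg1, hg2⟩ := exists_dual_vector ℝ v (norm_ne_zero_iff.2 hv)
  obtain ⟨z, hz⟩ := repr_exists hdim halt hω (g : E →ₗ[ℝ] ℝ)
  refine ⟨z, by rw [hz]; exact hg2, fun u => ?_⟩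
  rw [hz]
  calc |(g : E →ₗ[ℝ] ℝ) u| = ‖g u‖ := by rw [Real.norm_eq_abs]; rfl
    _ ≤ ‖g‖ * ‖u‖ := g.le_opNorm u
    _ = ‖u‖ := by rw [hg1, one_mul]

lemma nnorm_exists (v : E) :
    ∃ z : E, ‖z‖ = 1 ∧ ω z v = antinorm ω v ∧ ∀ u : E, |ω z u| ≤ antinorm ω u := by
  obtain ⟨a, ha, hax⟩ := antinorm_attain (ω := ω) hdim v
  rcases le_or_gt 0 (ω a v) with h | h
  · exact ⟨a, ha, by rw [← hax, abs_of_nonneg h], fun u => le_antinorm hdim ha u⟩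
  · refine ⟨-a, by rw [norm_neg, ha], ?_, fun u => ?_⟩
    · have : ω (-a) v = - ω a v := by simp
      rw [this, ← hax, abs_of_neg h]
    · have : |ω (-a) u| = |ω a u| := by simp
      rw [this]
      exact le_antinorm hdim ha u

lemma birk_of_norming (halt : ∀ x : E, ω x x = 0) {v z : E}
    (hb : ∀ u : E, |ω z u| ≤ ‖u‖) (he : ω z v = ‖v‖) : BirkhoffOrth v z := by
  intro t
  have h1 : ω z (v + t • z) = ‖v‖ := by
    simp [map_add, map_smul, halt, he]
  calc ‖v‖ = |ω z (v + t • z)| := by rw [h1, abs_of_nonneg (norm_nonneg v)]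
    _ ≤ ‖v + t • z‖ := hb _

lemma james_fwd (halt : ∀ x : E, ω x x = 0) (hω : ω ≠ 0) {x y : E}
    (hx : x ≠ 0) (hy : y ≠ 0) (h : BirkhoffOrth x y) :
    |ω x y| = ‖x‖ * antinorm ω y := by
  haveI := fd hdim
  have hxn : (0:ℝ) < ‖x‖ := norm_pos_iff.2 hx
  set s : Set E := Metric.ball (0:E) ‖x‖ with hs
  set L : Set E := {p | ∃ t : ℝ, p = x + t • y} with hL
  have hconv : Convex ℝ L := by
    rintro p ⟨tp, rfl⟩ q ⟨tq, rfl⟩ a b ha hb hab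
    refine ⟨a * tp + b * tq, ?_⟩
    have : a • (x + tp • y) + b • (x + tq • y)
        = (a + b) • x + (a * tp + b * tq) • y := by
      simp only [smul_add, smul_smul, add_smul]
      abel
    rw [this, hab, one_smul]
  have hdisj : Disjoint s L := by
    rw [Set.disjoint_left]
    rintro p hp ⟨t, rfl⟩
    rw [hs, Metric.mem_ball, dist_zero_right] at hp
    exact absurd hp (not_lt.2 (h t))
  obtain ⟨f, u, hfs, hfL⟩ :=
    geometric_hahn_banach_open (convex_ball (0:E) ‖x‖) Metric.isOpen_ball hconv hdisj
  have hu0 : 0 < u := by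
    have := hfs 0 (by simp [hs, hxn])
    simpa using this
  have hfx : u ≤ f x := hfL x ⟨0, by simp⟩
  have hfy : f y = 0 := by
    by_contra hf
    have ht := hfL (x + ((u - 1 - f x) / f y) • y) ⟨_, rfl⟩
    rw [map_add, map_smul, smul_eq_mul, div_mul_cancel₀ _ hf] at ht
    linarith
  have hbd : ∀ a : E, f a ≤ u / ‖x‖ * ‖a‖ := by
    intro a
    rcases eq_or_ne a 0 with rfl | ha
    · simp
    have han : (0:ℝ) < ‖a‖ := norm_pos_iff.2 ha
    have key : ∀ ε : ℝ, 0 < ε → ‖x‖ * f a < u * ‖a‖ + u * ε := by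
      intro ε hε
      have hmem : (‖x‖ / (‖a‖ + ε)) • a ∈ s := by
        rw [hs, Metric.mem_ball, dist_zero_right, norm_smul, Real.norm_eq_abs,
          abs_of_pos (by positivity)]
        rw [div_mul_eq_mul_div, div_lt_iff₀ (by positivity)]
        nlinarith
      have := hfs _ hmem
      rw [map_smul, smul_eq_mul, div_mul_eq_mul_div, div_lt_iff₀ (by positivity)] at this
      nlinarith
    have h2 : ‖x‖ * f a ≤ u * ‖a‖ := by
      by_contra hcon
      push_neg at hcon
      set D := ‖x‖ * f a - u * ‖a‖ with hD
      have hDpos : 0 < D := by rw [hD]; linarith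
      have hk := key (D / (2 * u)) (div_pos hDpos (by positivity))
      have he : u * (D / (2 * u)) = D / 2 := by field_simp
      rw [he] at hk
      rw [hD] at hk
      linarith
    rw [div_mul_eq_mul_div, le_div_iff₀ hxn]
    linarith
  have habs : ∀ a : E, |f a| ≤ u / ‖x‖ * ‖a‖ := by
    intro a
    rcases abs_cases (f a) with ⟨he, _⟩ | ⟨he, _⟩
    · rw [he]; exact hbd a
    · rw [he]
      have := hbd (-a)
      rw [map_neg, norm_neg] at this
      linarith
  obtain ⟨z, hz⟩ := repr_exists hdim halt hω (f : E →ₗ[ℝ] ℝ)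
  have hzf : ∀ w : E, ω z w = f w := hz
  have hz0 : z ≠ 0 := by
    rintro rfl
    have : f x = 0 := by rw [← hzf x]; simp
    linarith
  have hzy : ω z y = 0 := by rw [hzf]; exact hfy
  obtain ⟨μ, hμ⟩ := mult_of_ker hdim halt hω hy hzy
  have hμ0 : μ ≠ 0 := by rintro rfl; simp at hμ; exact hz0 hμ
  have hμpos : 0 < |μ| := abs_pos.2 hμ0
  have hfxz : f x = μ * ω y x := by
    rw [← hzf x, hμ]; simp
  have hNy := antinorm_pos hdim halt hω hy
  -- chain of inequalities
  have hA : u ≤ |μ| * |ω x y| := by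
    have h2 : |ω y x| = |ω x y| := by rw [anti halt y x, abs_neg]
    rw [hfxz] at hfx
    calc u ≤ μ * ω y x := hfx
      _ ≤ |μ * ω y x| := le_abs_self _
      _ = |μ| * |ω x y| := by rw [abs_mul, h2]
  have hB : |ω x y| ≤ ‖x‖ * antinorm ω y := antinorm_le_bound hdim x y
  have hC : |μ| * antinorm ω y ≤ u / ‖x‖ := by
    have hstep : antinorm ω y ≤ u / ‖x‖ / |μ| := by
      refine antinorm_csSup_le hdim (fun a ha => ?_)
      have h1 : |ω z a| ≤ u / ‖x‖ := by
        rw [hzf]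
        have := habs a
        rw [ha, mul_one] at this
        exact this
      have h2 : |ω z a| = |μ| * |ω y a| := by rw [hμ]; simp [abs_mul]
      have h3 : |ω a y| = |ω y a| := by rw [anti halt a y, abs_neg]
      rw [h3, le_div_iff₀ hμpos, mul_comm]
      rw [h2] at h1
      exact h1
    rw [le_div_iff₀ hμpos] at hstep
    calc |μ| * antinorm ω y = antinorm ω y * |μ| := mul_comm _ _
      _ ≤ u / ‖x‖ := hstep
  have hC' : |μ| * (‖x‖ * antinorm ω y) ≤ u := by
    rw [le_div_iff₀ hxn] at hC
    nlinarith
  have hB' : |μ| * |ω x y| ≤ |μ| * (‖x‖ * antinorm ω y) :=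
    mul_le_mul_of_nonneg_left hB (abs_nonneg μ)
  have : |μ| * |ω x y| = |μ| * (‖x‖ * antinorm ω y) := le_antisymm hB' (by linarith)
  exact mul_left_cancel₀ (ne_of_gt hμpos) this

lemma james_bwd (halt : ∀ x : E, ω x x = 0) (hω : ω ≠ 0) {x y : E}
    (hy : y ≠ 0) (h : |ω x y| = ‖x‖ * antinorm ω y) : BirkhoffOrth x y := by
  intro t
  have hNy := antinorm_pos hdim halt hω hy
  have h1 : ω (x + t • y) y = ω x y := by
    simp [map_add, map_smul, halt]
  have h2 : |ω (x + t • y) y| ≤ ‖x + t • y‖ * antinorm ω y :=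
    antinorm_le_bound hdim _ y
  rw [h1, h] at h2
  exact le_of_mul_le_mul_right h2 hNy

end HB


section Deriv

lemma seg_right_deriv
    (p : E → ℝ)
    (hadd : ∀ a b : E, p (a + b) ≤ p a + p b)
    (hsmul : ∀ (c : ℝ) (a : E), p (c • a) = |c| * p a)
    (hcont : Continuous p)
    (C : ℝ)
    (hnorm : ∀ v : E, v ≠ 0 → ∃ z : E, (ω z v = p v ∧ ∀ u : E, |ω z u| ≤ p u) ∧ ‖z‖ ≤ C)
    (x w : E) {t : ℝ} (ht0 : 0 ≤ t) (ht1 : t < 1)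
    (hv : ∀ r : ℝ, r ∈ Set.Icc (0:ℝ) 1 → x + r • w ≠ 0) :
    ∃ z : E, (ω z (x + t • w) = p (x + t • w) ∧ ∀ u : E, |ω z u| ≤ p u) ∧
      HasDerivWithinAt (fun r : ℝ => p (x + r • w)) (ω z w) (Set.Ici t) t ∧
      ∀ z' : E, (ω z' (x + t • w) = p (x + t • w) ∧ ∀ u : E, |ω z' u| ≤ p u) →
        ω z' w ≤ ω z w := by
  haveI := fd hdim
  obtain ⟨B, hB, hb⟩ := omega_bound (ω := ω) hdim
  set v : ℝ → E := fun r => x + r • w with hvdef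
  have hvadd : ∀ r h' : ℝ, v (r + h') = v r + h' • w := by
    intro r h'
    simp only [hvdef, add_smul]
    abel
  set φ : ℝ → ℝ := fun r => p (v r) with hφdef
  set σ : ℝ → ℝ := fun h => (φ (t + h) - φ t) / h with hσdef
  have hvt : v t ≠ 0 := hv t ⟨ht0, le_of_lt ht1⟩
  have low : ∀ z' : E, (ω z' (v t) = p (v t) ∧ ∀ u : E, |ω z' u| ≤ p u) →
      ∀ h : ℝ, 0 < h → ω z' w ≤ σ h := by
    rintro z' ⟨hz1, hz2⟩ h hh
    have h2 : ω z' (v (t + h)) = φ t + h * ω z' w := by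
      rw [hvadd t h, map_add, LinearMap.map_smul, hz1]
      simp [hφdef, smul_eq_mul]
    have h1 : φ t + h * ω z' w ≤ φ (t + h) := by
      rw [← h2]
      exact le_trans (le_abs_self _) (hz2 _)
    rw [hσdef, le_div_iff₀ hh]
    linarith
  have mono : MonotoneOn σ (Set.Ioi (0:ℝ)) := by
    rintro h₁ (h1p : 0 < h₁) h₂ (h2p : 0 < h₂) h12
    have hvcomb : v (t + h₁) = ((h₂ - h₁)/h₂) • v t + (h₁/h₂) • v (t + h₂) := by
      have e1 : ((h₂ - h₁)/h₂) • (x + t • w) + (h₁/h₂) • (x + (t + h₂) • w)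
          = ((h₂ - h₁)/h₂ + h₁/h₂) • x
            + (((h₂ - h₁)/h₂) * t + (h₁/h₂) * (t + h₂)) • w := by
        module
      have e2 : (h₂ - h₁)/h₂ + h₁/h₂ = 1 := by field_simp; ring
      have e3 : ((h₂ - h₁)/h₂) * t + (h₁/h₂) * (t + h₂) = t + h₁ := by
        field_simp
        ring
      rw [hvdef]
      show x + (t + h₁) • w = _
      rw [e1, e2, e3, one_smul]
    have hconv : φ (t + h₁) ≤ ((h₂ - h₁)/h₂) * φ t + (h₁/h₂) * φ (t + h₂) := by
      rw [hφdef]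
      show p (v (t + h₁)) ≤ _
      rw [hvcomb]
      calc p (((h₂ - h₁)/h₂) • v t + (h₁/h₂) • v (t + h₂))
          ≤ p (((h₂ - h₁)/h₂) • v t) + p ((h₁/h₂) • v (t + h₂)) := hadd _ _
        _ = ((h₂ - h₁)/h₂) * p (v t) + (h₁/h₂) * p (v (t + h₂)) := by
            have a1 : |(h₂ - h₁)/h₂| = (h₂ - h₁)/h₂ :=
              abs_of_nonneg (div_nonneg (by linarith) h2p.le)
            have a2 : |h₁/h₂| = h₁/h₂ := abs_of_nonneg (div_nonneg h1p.le h2p.le)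
            simp only [hsmul, a1, a2]
    have hkey : h₂ * φ (t + h₁) ≤ (h₂ - h₁) * φ t + h₁ * φ (t + h₂) := by
      have hmul := mul_le_mul_of_nonneg_left hconv (le_of_lt h2p)
      calc h₂ * φ (t + h₁)
          ≤ h₂ * (((h₂ - h₁)/h₂) * φ t + (h₁/h₂) * φ (t + h₂)) := hmul
        _ = (h₂ - h₁) * φ t + h₁ * φ (t + h₂) := by field_simp
    rw [hσdef]
    show (φ (t + h₁) - φ t) / h₁ ≤ (φ (t + h₂) - φ t) / h₂
    rw [div_le_div_iff₀ h1p h2p]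
    nlinarith
  obtain ⟨z₀, hz₀n, _⟩ := hnorm (v t) hvt
  have hbdd : BddBelow (σ '' Set.Ioi (0:ℝ)) := by
    refine ⟨ω z₀ w, ?_⟩
    rintro b ⟨h, hh, rfl⟩
    exact low z₀ hz₀n h hh
  have hne : (σ '' Set.Ioi (0:ℝ)).Nonempty := ⟨σ 1, 1, by norm_num, rfl⟩
  set s : ℝ := sInf (σ '' Set.Ioi (0:ℝ)) with hsdef
  have htend : Filter.Tendsto σ (nhdsWithin 0 (Set.Ioi 0)) (nhds s) :=
    mono.tendsto_nhdsGT hbdd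
  have hderiv : HasDerivWithinAt φ s (Set.Ici t) t := by
    rw [hasDerivWithinAt_iff_tendsto_slope, Set.Ici_sdiff_left]
    have hmap : Filter.Tendsto (fun r : ℝ => r - t) (nhdsWithin t (Set.Ioi t))
        (nhdsWithin 0 (Set.Ioi 0)) := by
      rw [tendsto_nhdsWithin_iff]
      constructor
      · have h1 : Filter.Tendsto (fun r : ℝ => r - t) (nhds t) (nhds (t - t)) :=
          ((continuous_id.sub continuous_const).tendsto t)
        rw [sub_self] at h1
        exact h1.mono_left nhdsWithin_le_nhds
      · filter_upwards [self_mem_nhdsWithin] with r hr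
        exact sub_pos.2 (Set.mem_Ioi.1 hr)
    have hcomp := htend.comp hmap
    refine hcomp.congr (fun r => ?_)
    show (φ (t + (r - t)) - φ t) / (r - t) = slope φ t r
    have hr : t + (r - t) = r := by ring
    rw [slope_def_field, hr]
  set hn : ℕ → ℝ := fun n => (1 - t)/(n + 1) with hhn
  have hnpos : ∀ n, 0 < hn n := fun n => div_pos (by linarith) (by positivity)
  have hnle : ∀ n, hn n ≤ 1 - t := by
    intro n
    rw [hhn]
    apply div_le_self (by linarith)
    have : (0:ℝ) ≤ (n:ℝ) := Nat.cast_nonneg n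
    linarith
  have hmem : ∀ n : ℕ, t + hn n ∈ Set.Icc (0:ℝ) 1 := fun n =>
    ⟨by linarith [hnpos n], by linarith [hnle n]⟩
  have hvn : ∀ n : ℕ, v (t + hn n) ≠ 0 := fun n => hv _ (hmem n)
  choose zs hzs hzC using fun n => hnorm (v (t + hn n)) (hvn n)
  have hzball : ∀ n, zs n ∈ Metric.closedBall (0:E) C := fun n => by
    rw [Metric.mem_closedBall, dist_zero_right]; exact hzC n
  obtain ⟨zst, hzstmem, g, hgmono, hgtend⟩ :=
    (isCompact_closedBall (0:E) C).tendsto_subseq hzball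
  have hn0 : Filter.Tendsto hn Filter.atTop (nhds 0) := by
    have h1 : Filter.Tendsto (fun n : ℕ => 1/((n:ℝ) + 1)) Filter.atTop (nhds 0) :=
      tendsto_one_div_add_atTop_nhds_zero_nat
    have h2 := h1.const_mul (1 - t)
    rw [mul_zero] at h2
    refine h2.congr (fun n => ?_)
    rw [hhn]
    show (1 - t) * (1/((n:ℝ) + 1)) = (1 - t)/((n:ℝ) + 1)
    ring
  have hng : Filter.Tendsto (fun k => hn (g k)) Filter.atTop (nhds 0) :=
    hn0.comp hgmono.tendsto_atTop
  have hvcont : Continuous v := by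
    rw [hvdef]
    exact continuous_const.add (continuous_id.smul continuous_const)
  have hvg : Filter.Tendsto (fun k => v (t + hn (g k))) Filter.atTop (nhds (v t)) := by
    have h1 : Filter.Tendsto (fun k => t + hn (g k)) Filter.atTop (nhds t) := by
      have := (tendsto_const_nhds : Filter.Tendsto _ Filter.atTop (nhds t)).add hng
      simpa using this
    exact (hvcont.tendsto t).comp h1
  have hfl : ∀ u : E, Filter.Tendsto (fun k => ω (zs (g k)) u) Filter.atTop
      (nhds (ω zst u)) := by
    intro u
    have hc : Continuous (fun z : E => ω z u) := by
      have := (ω.flip u).continuous_of_finiteDimensional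
      convert this using 1
      funext z; rfl
    exact (hc.tendsto zst).comp hgtend
  have F2 : ∀ u : E, |ω zst u| ≤ p u := by
    intro u
    have h1 : Filter.Tendsto (fun k => |ω (zs (g k)) u|) Filter.atTop (nhds |ω zst u|) :=
      (continuous_abs.tendsto _).comp (hfl u)
    exact le_of_tendsto h1 (Filter.Eventually.of_forall (fun k => (hzs (g k)).2 u))
  have F1 : ω zst (v t) = p (v t) := by
    have termB : Filter.Tendsto (fun k => ω (zs (g k)) (v (t + hn (g k)) - v t))
        Filter.atTop (nhds 0) := by
      apply squeeze_zero_norm (a := fun k => B * C * ‖v (t + hn (g k)) - v t‖)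
      · intro k
        rw [Real.norm_eq_abs]
        calc |ω (zs (g k)) (v (t + hn (g k)) - v t)|
            ≤ B * ‖zs (g k)‖ * ‖v (t + hn (g k)) - v t‖ := hb _ _
          _ ≤ B * C * ‖v (t + hn (g k)) - v t‖ := by
              gcongr
              exact hzC (g k)
      · have h1 : Filter.Tendsto (fun k => v (t + hn (g k)) - v t) Filter.atTop
            (nhds 0) := by
          have := hvg.sub (tendsto_const_nhds : Filter.Tendsto _ Filter.atTop (nhds (v t)))
          simpa using this
        have h2 : Filter.Tendsto (fun k => ‖v (t + hn (g k)) - v t‖) Filter.atTop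
            (nhds 0) := by
          have := (continuous_norm.tendsto (0:E)).comp h1
          simpa [Function.comp_def] using this
        have h3 := h2.const_mul (B * C)
        rw [mul_zero] at h3
        exact h3
    have lim1 : Filter.Tendsto (fun k => ω (zs (g k)) (v (t + hn (g k)))) Filter.atTop
        (nhds (ω zst (v t))) := by
      have hsum := (hfl (v t)).add termB
      rw [add_zero] at hsum
      refine hsum.congr (fun k => ?_)
      rw [← map_add]
      congr 1
      abel
    have lim2 : Filter.Tendsto (fun k => p (v (t + hn (g k)))) Filter.atTop
        (nhds (p (v t))) := (hcont.tendsto _).comp hvg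
    have heq : (fun k => ω (zs (g k)) (v (t + hn (g k))))
        = fun k => p (v (t + hn (g k))) := funext (fun k => (hzs (g k)).1)
    rw [heq] at lim1
    exact tendsto_nhds_unique lim1 lim2
  have maxle : ∀ z' : E, (ω z' (v t) = p (v t) ∧ ∀ u : E, |ω z' u| ≤ p u) →
      ω z' w ≤ s := by
    intro z' hz'
    refine le_csInf hne ?_
    rintro b ⟨h, hh, rfl⟩
    exact low z' hz' h hh
  have F3 : s ≤ ω zst w := by
    have hσn : ∀ n, σ (hn n) ≤ ω (zs n) w := by
      intro n
      have h1 : ω (zs n) (v t) ≤ φ t := le_trans (le_abs_self _) ((hzs n).2 _)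
      have h2 : ω (zs n) (v (t + hn n)) = ω (zs n) (v t) + hn n * ω (zs n) w := by
        rw [hvadd t (hn n), map_add, LinearMap.map_smul]
        simp [smul_eq_mul]
      have h3 : φ (t + hn n) = ω (zs n) (v (t + hn n)) := ((hzs n).1).symm
      rw [hσdef]
      show (φ (t + hn n) - φ t) / hn n ≤ ω (zs n) w
      rw [div_le_iff₀ (hnpos n), h3, h2]
      linarith
    have hσg : Filter.Tendsto (fun k => σ (hn (g k))) Filter.atTop (nhds s) := by
      apply htend.comp
      rw [tendsto_nhdsWithin_iff]
      exact ⟨hng, Filter.Eventually.of_forall (fun k => hnpos (g k))⟩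
    exact le_of_tendsto_of_tendsto' hσg (hfl w) (fun k => hσn (g k))
  have hseq : ω zst w = s := le_antisymm (maxle zst ⟨F1, F2⟩) F3
  refine ⟨zst, ⟨F1, F2⟩, ?_, ?_⟩
  · rw [hseq]
    exact hderiv
  · intro z' hz'
    rw [hseq]
    exact maxle z' hz'

end Deriv

section Core

lemma antinorm_lower (halt : ∀ x : E, ω x x = 0) (hω : ω ≠ 0) :
    ∃ δ : ℝ, 0 < δ ∧ ∀ e : E, δ * ‖e‖ ≤ antinorm ω e := by
  haveI := fd hdim
  have hc : IsCompact (Metric.sphere (0:E) 1) := isCompact_sphere 0 1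
  obtain ⟨a, ha, hmin⟩ := hc.exists_isMinOn (sphere_ne hdim)
    (antinorm_continuous (ω := ω) hdim).continuousOn
  have ha' : ‖a‖ = 1 := by simpa [Metric.mem_sphere, dist_zero_right] using ha
  have ha0 : a ≠ 0 := by
    intro h; rw [h, norm_zero] at ha'; norm_num at ha'
  refine ⟨antinorm ω a, antinorm_pos hdim halt hω ha0, fun e => ?_⟩
  rcases eq_or_ne e 0 with rfl | he
  · simp [antinorm_zero' hdim]
  have hen : (0:ℝ) < ‖e‖ := norm_pos_iff.2 he
  have h1 : ‖(‖e‖⁻¹ • e)‖ = 1 := by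
    rw [norm_smul, norm_inv, norm_norm, inv_mul_cancel₀ (ne_of_gt hen)]
  have h2 : antinorm ω a ≤ antinorm ω (‖e‖⁻¹ • e) := by
    have : (‖e‖⁻¹ • e) ∈ Metric.sphere (0:E) 1 := by
      simp [Metric.mem_sphere, dist_zero_right, h1]
    exact hmin this
  rw [antinorm_smul hdim, abs_of_nonneg (inv_nonneg.2 (norm_nonneg e))] at h2
  calc antinorm ω a * ‖e‖ ≤ (‖e‖⁻¹ * antinorm ω e) * ‖e‖ :=
        mul_le_mul_of_nonneg_right h2 (norm_nonneg e)
    _ = antinorm ω e := by field_simp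

lemma fnorming_anti_one (halt : ∀ x : E, ω x x = 0) (hω : ω ≠ 0) {v z : E} (hv : v ≠ 0)
    (h1 : ω z v = ‖v‖) (h2 : ∀ u : E, |ω z u| ≤ ‖u‖) : antinorm ω z = 1 := by
  have hvp : (0:ℝ) < ‖v‖ := norm_pos_iff.2 hv
  have hz0 : z ≠ 0 := by
    rintro rfl
    have : ω (0:E) v = 0 := by simp
    rw [h1] at this
    linarith
  have hb : BirkhoffOrth v z := birk_of_norming hdim halt h2 h1
  have hj := james_fwd hdim halt hω hv hz0 hb
  have habs : |ω v z| = ‖v‖ := by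
    rw [anti halt v z, abs_neg, h1, abs_of_nonneg (norm_nonneg v)]
  rw [habs] at hj
  have := hj.symm
  nlinarith

lemma fnorming_norm_eq (halt : ∀ x : E, ω x x = 0) (hω : ω ≠ 0)
    (hsymm : ∀ x y : E, BirkhoffOrth x y → BirkhoffOrth y x)
    {v z : E} (hv : v ≠ 0)
    (h1 : ω z v = ‖v‖) (h2 : ∀ u : E, |ω z u| ≤ ‖u‖) :
    ‖z‖ * antinorm ω v = ‖v‖ := by
  have hvp : (0:ℝ) < ‖v‖ := norm_pos_iff.2 hv
  have hz0 : z ≠ 0 := by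
    rintro rfl
    have : ω (0:E) v = 0 := by simp
    rw [h1] at this
    linarith
  have hb : BirkhoffOrth v z := birk_of_norming hdim halt h2 h1
  have hb2 : BirkhoffOrth z v := hsymm v z hb
  have hj := james_fwd hdim halt hω hz0 hv hb2
  rw [h1, abs_of_nonneg (norm_nonneg v)] at hj
  linarith [hj]

lemma fnorming_to_nnorming (halt : ∀ x : E, ω x x = 0) (hω : ω ≠ 0)
    (hsymm : ∀ x y : E, BirkhoffOrth x y → BirkhoffOrth y x)
    {v z : E} (hv : v ≠ 0)
    (h1 : ω z v = ‖v‖) (h2 : ∀ u : E, |ω z u| ≤ ‖u‖) :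
    ω ((antinorm ω v / ‖v‖) • z) v = antinorm ω v ∧
      ∀ u : E, |ω ((antinorm ω v / ‖v‖) • z) u| ≤ antinorm ω u := by
  have hvp : (0:ℝ) < ‖v‖ := norm_pos_iff.2 hv
  have hNv := antinorm_pos hdim halt hω hv
  have hz0 : z ≠ 0 := by
    rintro rfl
    have : ω (0:E) v = 0 := by simp
    rw [h1] at this
    linarith
  have hzn : ‖z‖ * antinorm ω v = ‖v‖ := fnorming_norm_eq hdim halt hω hsymm hv h1 h2
  have hzp : (0:ℝ) < ‖z‖ := norm_pos_iff.2 hz0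
  constructor
  · have : ω ((antinorm ω v / ‖v‖) • z) v = (antinorm ω v / ‖v‖) * ω z v := by
      simp [map_smul]
    rw [this, h1]
    field_simp
  · intro u
    have hb : |ω z u| ≤ ‖z‖ * antinorm ω u := by
      have h3 : ‖(‖z‖⁻¹ • z)‖ = 1 := by
        rw [norm_smul, norm_inv, norm_norm, inv_mul_cancel₀ (ne_of_gt hzp)]
      have h4 := le_antinorm (ω := ω) hdim h3 u
      have h5 : |ω (‖z‖⁻¹ • z) u| = ‖z‖⁻¹ * |ω z u| := by
        simp [map_smul, abs_mul, abs_of_nonneg (inv_nonneg.2 (norm_nonneg z))]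
      rw [h5] at h4
      calc |ω z u| = ‖z‖ * (‖z‖⁻¹ * |ω z u|) := by field_simp
        _ ≤ ‖z‖ * antinorm ω u := mul_le_mul_of_nonneg_left h4 (norm_nonneg z)
    have h6 : |ω ((antinorm ω v / ‖v‖) • z) u| = (antinorm ω v / ‖v‖) * |ω z u| := by
      simp [map_smul, abs_mul, abs_of_nonneg (le_of_lt (div_pos hNv hvp))]
    rw [h6]
    have h7 : (antinorm ω v / ‖v‖) * ‖z‖ = 1 := by
      rw [div_mul_eq_mul_div, mul_comm (antinorm ω v) ‖z‖, hzn, div_self (ne_of_gt hvp)]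
    calc (antinorm ω v / ‖v‖) * |ω z u| ≤ (antinorm ω v / ‖v‖) * (‖z‖ * antinorm ω u) :=
          mul_le_mul_of_nonneg_left hb (le_of_lt (div_pos hNv hvp))
      _ = ((antinorm ω v / ‖v‖) * ‖z‖) * antinorm ω u := by ring
      _ = antinorm ω u := by rw [h7, one_mul]

lemma nnorming_to_fnorming (halt : ∀ x : E, ω x x = 0) (hω : ω ≠ 0)
    (hsymm : ∀ x y : E, BirkhoffOrth x y → BirkhoffOrth y x)
    {v ζ : E} (hv : v ≠ 0)
    (h1 : ω ζ v = antinorm ω v) (h2 : ∀ u : E, |ω ζ u| ≤ antinorm ω u) :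
    ω ((‖v‖ / antinorm ω v) • ζ) v = ‖v‖ ∧
      ∀ u : E, |ω ((‖v‖ / antinorm ω v) • ζ) u| ≤ ‖u‖ := by
  haveI := fd hdim
  have hvp : (0:ℝ) < ‖v‖ := norm_pos_iff.2 hv
  have hNv := antinorm_pos hdim halt hω hv
  have hζ0 : ζ ≠ 0 := by
    rintro rfl
    have : ω (0:E) v = 0 := by simp
    rw [h1] at this
    linarith
  -- step 1 : ‖ζ‖ ≤ 1
  have step1 : ‖ζ‖ ≤ 1 := by
    obtain ⟨z, hz1, hz2⟩ := fnorm_exists hdim halt hω hζ0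
    have hNz : antinorm ω z = 1 := fnorming_anti_one hdim halt hω hζ0 hz1 hz2
    have h3 : |ω ζ z| ≤ antinorm ω z := h2 z
    have h4 : |ω ζ z| = ‖ζ‖ := by
      rw [anti halt ζ z, abs_neg, hz1, abs_of_nonneg (norm_nonneg ζ)]
    rw [h4, hNz] at h3
    exact h3
  -- step 2 : 1 ≤ ‖ζ‖
  have step2 : (1:ℝ) ≤ ‖ζ‖ := by
    have h3 := antinorm_le_bound (ω := ω) hdim ζ v
    rw [h1, abs_of_nonneg (le_of_lt hNv)] at h3
    nlinarith
  have hζn : ‖ζ‖ = 1 := le_antisymm step1 step2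
  -- step 3: ζ ⊣_F v
  have hb : BirkhoffOrth ζ v := by
    apply james_bwd hdim halt hω hv
    rw [h1, hζn, one_mul, abs_of_nonneg (le_of_lt hNv)]
  -- step 4: v ⊣_F ζ and N ζ = N v / ‖v‖
  have hb2 : BirkhoffOrth v ζ := hsymm ζ v hb
  have hj := james_fwd hdim halt hω hv hζ0 hb2
  have habs : |ω v ζ| = antinorm ω v := by
    rw [anti halt v ζ, abs_neg, h1, abs_of_nonneg (le_of_lt hNv)]
  rw [habs] at hj
  have hNζ : antinorm ω ζ = antinorm ω v / ‖v‖ := by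
    rw [hj]; field_simp
  constructor
  · have : ω ((‖v‖ / antinorm ω v) • ζ) v = (‖v‖ / antinorm ω v) * ω ζ v := by
      simp [map_smul]
    rw [this, h1]
    field_simp
  · intro u
    have hbu : |ω ζ u| ≤ ‖u‖ * antinorm ω ζ := by
      have := antinorm_le_bound (ω := ω) hdim u ζ
      rw [anti halt ζ u, abs_neg]
      exact this
    rw [hNζ] at hbu
    have h6 : |ω ((‖v‖ / antinorm ω v) • ζ) u| = (‖v‖ / antinorm ω v) * |ω ζ u| := by
      simp [map_smul, abs_mul, abs_of_nonneg (le_of_lt (div_pos hvp hNv))]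
    rw [h6]
    calc (‖v‖ / antinorm ω v) * |ω ζ u|
        ≤ (‖v‖ / antinorm ω v) * (‖u‖ * (antinorm ω v / ‖v‖)) :=
          mul_le_mul_of_nonneg_left hbu (le_of_lt (div_pos hvp hNv))
      _ = ‖u‖ := by field_simp

lemma ratio_const (halt : ∀ x : E, ω x x = 0) (hω : ω ≠ 0)
    (hsymm : ∀ x y : E, BirkhoffOrth x y → BirkhoffOrth y x)
    {x y : E} (hx : x ≠ 0) (hy : y ≠ 0) :
    antinorm ω x * ‖y‖ = antinorm ω y * ‖x‖ := by
  haveI := fd hdim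
  by_cases hdep : ∃ a : ℝ, y = a • x
  · obtain ⟨a, rfl⟩ := hdep
    rw [antinorm_smul hdim, norm_smul, Real.norm_eq_abs]
    ring
  -- independent case
  set w : E := y - x with hwdef
  have hv : ∀ r : ℝ, r ∈ Set.Icc (0:ℝ) 1 → x + r • w ≠ 0 := by
    intro r hr hzero
    have hcomb : (1 - r) • x + r • y = 0 := by
      rw [hwdef] at hzero
      rw [← hzero]
      module
    rcases eq_or_ne r 0 with rfl | hr0
    · simp at hcomb
      exact hx hcomb
    · apply hdep
      refine ⟨(r - 1)/r, ?_⟩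
      have h8 : r • y = (r - 1) • x := by
        have h9 : (1 - r) • x = -(r • y) := by
          rw [eq_neg_iff_add_eq_zero]
          exact hcomb
        have h9' := congrArg Neg.neg h9
        rw [neg_neg] at h9'
        rw [← h9']
        module
      have h10 := congrArg (fun e : E => r⁻¹ • e) h8
      simp only [smul_smul] at h10
      rw [inv_mul_cancel₀ hr0, one_smul] at h10
      rw [h10, div_eq_mul_inv, mul_comm]
  set q : ℝ → ℝ := fun r => antinorm ω (x + r • w) / ‖x + r • w‖ with hqdef
  obtain ⟨δ, hδ, hδl⟩ := antinorm_lower hdim halt hω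
  have hFnorm : ∀ v' : E, v' ≠ 0 → ∃ z : E,
      (ω z v' = ‖v'‖ ∧ ∀ u : E, |ω z u| ≤ ‖u‖) ∧ ‖z‖ ≤ δ⁻¹ := by
    intro v' hv'
    obtain ⟨z, hz1, hz2⟩ := fnorm_exists hdim halt hω hv'
    refine ⟨z, ⟨hz1, hz2⟩, ?_⟩
    have hNz : antinorm ω z = 1 := fnorming_anti_one hdim halt hω hv' hz1 hz2
    have h5 := hδl z
    rw [hNz] at h5
    calc ‖z‖ = δ⁻¹ * (δ * ‖z‖) := by field_simp
      _ ≤ δ⁻¹ * 1 := mul_le_mul_of_nonneg_left h5 (inv_nonneg.2 (le_of_lt hδ))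
      _ = δ⁻¹ := mul_one _
  have hNnorm : ∀ v' : E, v' ≠ 0 → ∃ z : E,
      (ω z v' = antinorm ω v' ∧ ∀ u : E, |ω z u| ≤ antinorm ω u) ∧ ‖z‖ ≤ 1 := by
    intro v' _
    obtain ⟨z, hz0, hz1, hz2⟩ := nnorm_exists (ω := ω) hdim v'
    exact ⟨z, ⟨hz1, hz2⟩, le_of_eq hz0⟩
  have hder : ∀ t ∈ Set.Ico (0:ℝ) 1, HasDerivWithinAt q 0 (Set.Ici t) t := by
    rintro t ⟨ht0, ht1⟩
    obtain ⟨zF, hzFn, hFderiv, hFmax⟩ := seg_right_deriv hdim (fun e : E => ‖e‖)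
      (fun a b => norm_add_le a b) (fun c a => by show ‖c • a‖ = |c| * ‖a‖; rw [norm_smul, Real.norm_eq_abs])
      continuous_norm δ⁻¹ hFnorm x w ht0 ht1 hv
    obtain ⟨zN, hzNn, hNderiv, hNmax⟩ := seg_right_deriv hdim (antinorm ω)
      (antinorm_add hdim) (antinorm_smul hdim) (antinorm_continuous hdim) 1
      hNnorm x w ht0 ht1 hv
    have hvt := hv t ⟨ht0, le_of_lt ht1⟩
    have hvtp : (0:ℝ) < ‖x + t • w‖ := norm_pos_iff.2 hvt
    have hNvt := antinorm_pos hdim halt hω hvt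
    have rel1 : ω zN w ≤ (antinorm ω (x + t • w) / ‖x + t • w‖) * ω zF w := by
      obtain ⟨hh1, hh2⟩ := nnorming_to_fnorming hdim halt hω hsymm hvt hzNn.1 hzNn.2
      have hle := hFmax _ ⟨hh1, hh2⟩
      rw [map_smul, LinearMap.smul_apply, smul_eq_mul] at hle
      have hpos : (0:ℝ) < antinorm ω (x + t • w) / ‖x + t • w‖ := div_pos hNvt hvtp
      have h2' := mul_le_mul_of_nonneg_left hle (le_of_lt hpos)
      have hcanc : (antinorm ω (x + t • w) / ‖x + t • w‖)
          * (‖x + t • w‖ / antinorm ω (x + t • w) * ω zN w) = ω zN w := by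
        field_simp
      rw [hcanc] at h2'
      exact h2'
    have rel2 : (antinorm ω (x + t • w) / ‖x + t • w‖) * ω zF w ≤ ω zN w := by
      obtain ⟨hh1, hh2⟩ := fnorming_to_nnorming hdim halt hω hsymm hvt hzFn.1 hzFn.2
      have hle := hNmax _ ⟨hh1, hh2⟩
      rw [map_smul, LinearMap.smul_apply, smul_eq_mul] at hle
      exact hle
    have req : ω zN w = (antinorm ω (x + t • w) / ‖x + t • w‖) * ω zF w :=
      le_antisymm rel1 rel2
    have hdiv := hNderiv.div hFderiv (ne_of_gt hvtp)
    have hval : (ω zN w * ‖x + t • w‖ - antinorm ω (x + t • w) * ω zF w)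
        / ‖x + t • w‖ ^ 2 = 0 := by
      rw [req]
      field_simp
      ring
    rw [hval] at hdiv
    exact hdiv
  have hcontq : ContinuousOn q (Set.Icc 0 1) := by
    have hvcont : Continuous (fun r : ℝ => x + r • w) :=
      continuous_const.add (continuous_id.smul continuous_const)
    apply ContinuousOn.div
    · exact ((antinorm_continuous hdim).comp hvcont).continuousOn
    · exact (continuous_norm.comp hvcont).continuousOn
    · intro r hr
      exact ne_of_gt (norm_pos_iff.2 (hv r hr))
  have hconst := constant_of_has_deriv_right_zero hcontq hder 1
    (by norm_num : (1:ℝ) ∈ Set.Icc (0:ℝ) 1)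
  have h2 : antinorm ω (x + (1:ℝ) • w) / ‖x + (1:ℝ) • w‖
      = antinorm ω (x + (0:ℝ) • w) / ‖x + (0:ℝ) • w‖ := hconst
  have e1 : x + (1:ℝ) • w = y := by
    rw [one_smul, hwdef]
    abel
  have e0 : x + (0:ℝ) • w = x := by simp
  rw [e1, e0] at h2
  have hxp : (0:ℝ) < ‖x‖ := norm_pos_iff.2 hx
  have hyp : (0:ℝ) < ‖y‖ := norm_pos_iff.2 hy
  rw [div_eq_div_iff (ne_of_gt hyp) (ne_of_gt hxp)] at h2
  linarith

end Core

section Assemble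

lemma symm_of_prop (halt : ∀ x : E, ω x x = 0) (hω : ω ≠ 0) {k : ℝ} (hk : 0 < k)
    (hprop : ∀ x : E, antinorm ω x = k * ‖x‖) :
    ∀ x y : E, BirkhoffOrth x y → BirkhoffOrth y x := by
  intro x y hxy
  rcases eq_or_ne y 0 with rfl | hy
  · intro t
    simpa using norm_nonneg (t • x)
  rcases eq_or_ne x 0 with rfl | hx
  · intro t
    simp
  have hj := james_fwd hdim halt hω hx hy hxy
  apply james_bwd hdim halt hω hx
  rw [anti halt y x, abs_neg, hj, hprop x, hprop y]
  ring

lemma prop_of_symm (halt : ∀ x : E, ω x x = 0) (hω : ω ≠ 0)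
    (hsymm : ∀ x y : E, BirkhoffOrth x y → BirkhoffOrth y x) :
    ∃ k : ℝ, 0 < k ∧ ∀ x : E, antinorm ω x = k * ‖x‖ := by
  haveI := ntriv hdim
  obtain ⟨x₀, hx₀⟩ := exists_ne (0 : E)
  have hx₀p : (0:ℝ) < ‖x₀‖ := norm_pos_iff.2 hx₀
  have hN₀ := antinorm_pos hdim halt hω hx₀
  refine ⟨antinorm ω x₀ / ‖x₀‖, div_pos hN₀ hx₀p, fun x => ?_⟩
  rcases eq_or_ne x 0 with rfl | hx
  · rw [antinorm_zero' hdim]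
    simp
  have hr := ratio_const hdim halt hω hsymm hx₀ hx
  rw [div_mul_eq_mul_div, eq_div_iff (ne_of_gt hx₀p)]
  linarith

lemma main_iff (halt : ∀ x : E, ω x x = 0) (hω : ω ≠ 0) :
    (∀ x y : E, BirkhoffOrth x y → BirkhoffOrth y x) ↔
      ∃ c : ℝ, 0 < c ∧
        {x : E | antinorm ω x = 1} = c • {x : E | ‖x‖ = 1} := by
  constructor
  · intro hsymm
    obtain ⟨k, hk, hprop⟩ := prop_of_symm hdim halt hω hsymm
    refine ⟨k⁻¹, by positivity, ?_⟩
    ext u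
    simp only [Set.mem_setOf_eq, Set.mem_smul_set]
    constructor
    · intro hu
      rw [hprop u] at hu
      refine ⟨k • u, ?_, ?_⟩
      · rw [norm_smul, Real.norm_eq_abs, abs_of_pos hk]
        nlinarith
      · rw [smul_smul, inv_mul_cancel₀ (ne_of_gt hk), one_smul]
    · rintro ⟨s, hs, rfl⟩
      rw [hprop, norm_smul, Real.norm_eq_abs, abs_of_pos (by positivity : (0:ℝ) < k⁻¹), hs]
      field_simp
  · rintro ⟨c, hc, hset⟩
    have hprop : ∀ x : E, antinorm ω x = c⁻¹ * ‖x‖ := by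
      intro x
      rcases eq_or_ne x 0 with rfl | hx
      · rw [antinorm_zero' hdim]; simp
      have ha := antinorm_pos hdim halt hω hx
      set a := antinorm ω x with haa
      have h1 : antinorm ω (a⁻¹ • x) = 1 := by
        rw [antinorm_smul hdim, abs_of_pos (by positivity), ← haa]
        field_simp
      have h2 : (a⁻¹ • x) ∈ {x : E | antinorm ω x = 1} := h1
      rw [hset] at h2
      obtain ⟨s, hs, hcs⟩ := h2
      have h3 : ‖a⁻¹ • x‖ = c := by
        rw [← hcs, norm_smul, Real.norm_eq_abs, abs_of_pos hc, hs, mul_one]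
      rw [norm_smul, Real.norm_eq_abs, abs_of_pos (by positivity)] at h3
      rw [haa]
      field_simp at h3 ⊢
      nlinarith
    exact symm_of_prop hdim halt hω (by positivity) hprop

end Assemble

end Dim

end Stmt12Aux

theorem stmt_12 {E : Type*} [NormedAddCommGroup E] [NormedSpace ℝ E]
    (hdim : Module.finrank ℝ E = 2)
    (ω : E →ₗ[ℝ] E →ₗ[ℝ] ℝ) (halt : ∀ x : E, ω x x = 0) (hω : ω ≠ 0) :
    (∀ x y : E, BirkhoffOrth x y → BirkhoffOrth y x) ↔
      ∃ c : ℝ, 0 < c ∧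
        {x : E | antinorm ω x = 1} = c • {x : E | ‖x‖ = 1} :=
  Stmt12Aux.main_iff hdim halt hω
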